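/- (Dyson lemma, 3D) Let v(r) ≥ 0 have finite range R₀ and scattering length a. Let U(r) ≥ 0 satisfy ∫₀^∞ U(r)r² dr ≤ 1 and U(r) = 0 for r < R₀. Let B ⊂ ℝ³ be star-shaped with respect to the origin. Then for all differentiable ψ on B: ∫_B [ μ|∇ψ(x)|² + (1/2)v(|x|)|ψ(x)|² ] dx ≥ μ·a·∫_B U(|x|)|ψ(x)|² dx. -/

import Mathlib

open MeasureTheory


open MeasureTheory Set intervalIntegral

lemma bdd_mul_int {R : ℝ} {c q : ℝ → ℝ} (hc : Continuous c)
    (hq : IntegrableOn q (Ioc 0 R)) :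
    IntegrableOn (fun r => c r * q r) (Ioc 0 R) := by
  obtain ⟨C, hC⟩ := (isCompact_Icc (a := (0:ℝ)) (b := R)).exists_bound_of_continuousOn
    hc.continuousOn
  refine Integrable.mono' (hq.norm.const_mul C) ((hc.aestronglyMeasurable).restrict.mul
    hq.aestronglyMeasurable) ?_
  filter_upwards [ae_restrict_mem measurableSet_Ioc] with x hx
  have h1 : ‖c x‖ ≤ C := hC x ⟨le_of_lt hx.1, hx.2⟩
  calc ‖c x * q x‖ = ‖c x‖ * ‖q x‖ := norm_mul _ _
    _ ≤ C * ‖q x‖ := by nlinarith [norm_nonneg (c x), norm_nonneg (q x)]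

lemma core1d {μ a R₀ R : ℝ} (hμ : 0 < μ) (ha : 0 < a) (hR₀ : 0 < R₀) (hR : R₀ < R)
    (v : ℝ → ℝ) (hvm : Measurable v) (hvpos : ∀ r, 0 ≤ v r)
    (u₀ u₀' u₀'' : ℝ → ℝ)
    (hu₀ : ∀ r, HasDerivAt u₀ (u₀' r) r) (hu₀' : ∀ r, HasDerivAt u₀' (u₀'' r) r)
    (heq : ∀ r, -2 * μ * u₀'' r + v r * u₀ r = 0)
    (h00 : u₀ 0 = 0) (hasym : ∀ r, R₀ < r → u₀ r = r - a)
    (f f' : ℝ → ℝ) (hf : ∀ r, HasDerivAt f (f' r) r)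
    (hi1 : IntegrableOn (fun r => f' r ^ 2 * r ^ 2) (Ioc 0 R))
    (hi2 : IntegrableOn (fun r => v r * f r ^ 2 * r ^ 2) (Ioc 0 R)) :
    μ * a * f R ^ 2 ≤ ∫ r in (0:ℝ)..R, (μ * f' r ^ 2 + (1/2) * v r * f r ^ 2) * r ^ 2 := by
  have hR0 : (0:ℝ) < R := hR₀.trans hR
  have hμ2 : (0:ℝ) < 2 * μ := by linarith
  set W : ℝ → ℝ := fun r => v r / (2 * μ) with hW
  have hWpos : ∀ r, 0 ≤ W r := fun r => div_nonneg (hvpos r) hμ2.le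
  have hWm : Measurable W := hvm.div_const _
  have hu₀'' : ∀ r, u₀'' r = W r * u₀ r := by
    intro r
    have h := heq r
    have : u₀'' r = v r * u₀ r / (2 * μ) := by field_simp; linarith
    rw [this, hW]; ring
  -- continuity
  have cf : Continuous f := Differentiable.continuous (fun x => (hf x).differentiableAt)
  have cu : Continuous u₀ := Differentiable.continuous (fun x => (hu₀ x).differentiableAt)
  have cu' : Continuous u₀' := Differentiable.continuous (fun x => (hu₀' x).differentiableAt)
  have mf' : Measurable f' := by
    have : f' = deriv f := funext fun r => ((hf r).deriv).symm
    rw [this]; exact measurable_deriv f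
  -- g and its derivative
  set g : ℝ → ℝ := fun r => r * f r with hgdef
  set g' : ℝ → ℝ := fun r => f r + r * f' r with hg'def
  have hg : ∀ r, HasDerivAt g (g' r) r := by
    intro r
    have := (hasDerivAt_id r).mul (hf r)
    refine this.congr_deriv ?_
    simp only [hg'def, id_eq]; ring
  have cg : Continuous g := continuous_id.mul cf
  -- integrabilities on Ioc 0 R
  have i_one : IntegrableOn (fun _ : ℝ => (1:ℝ)) (Ioc 0 R) :=
    integrableOn_const measure_Ioc_lt_top.ne
  have i_q1 : IntegrableOn (fun r => r * f' r) (Ioc 0 R) := by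
    refine Integrable.mono' ((i_one.add hi1).div_const 2)
      ((measurable_id.mul mf').aestronglyMeasurable) ?_
    filter_upwards with x
    have h2 : f' x ^ 2 * x ^ 2 = |x * f' x| ^ 2 := by rw [sq_abs]; ring
    rw [Real.norm_eq_abs]
    simp only [Pi.add_apply, Pi.div_apply]
    nlinarith [abs_nonneg (x * f' x), sq_nonneg (|x * f' x| - 1)]
  have i_g' : IntegrableOn g' (Ioc 0 R) := (cf.integrableOn_Ioc).add i_q1
  have i_q1f : IntegrableOn (fun r => f r * (r * f' r)) (Ioc 0 R) := bdd_mul_int cf i_q1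
  have i_h' : IntegrableOn (fun r => f r * f r + 2 * (f r * (r * f' r))) (Ioc 0 R) :=
    ((cf.mul cf).integrableOn_Ioc).add (i_q1f.const_mul 2)
  have i_g'sq : IntegrableOn (fun r => g' r ^ 2) (Ioc 0 R) := by
    have heq2 : (fun r => g' r ^ 2) = fun r =>
        (f r * f r + 2 * (f r * (r * f' r))) + f' r ^ 2 * r ^ 2 := by
      funext r; simp only [hg'def]; ring
    rw [heq2]
    exact i_h'.add hi1
  have i_g'u : IntegrableOn (fun r => u₀' r * g' r) (Ioc 0 R) := bdd_mul_int cu' i_g'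
  -- φ = u₀ * u₀'
  set φd : ℝ → ℝ := fun r => u₀' r ^ 2 + W r * u₀ r ^ 2 with hφd
  have hφdnn : ∀ x, 0 ≤ φd x := by
    intro x
    have h1 := hWpos x
    have h2 := sq_nonneg (u₀' x)
    have h3 := sq_nonneg (u₀ x)
    simp only [hφd]
    nlinarith
  have hφ : ∀ r, HasDerivAt (fun r => u₀ r * u₀' r) (φd r) r := by
    intro r
    have := (hu₀ r).mul (hu₀' r)
    rw [hu₀'' r] at this
    refine this.congr_deriv ?_
    simp only [hφd]; ring
  have i_φd : IntegrableOn φd (Ioc 0 R) :=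
    integrableOn_deriv_of_nonneg ((cu.mul cu').continuousOn) (fun x _ => hφ x)
      (fun x _ => hφdnn x)
  have i_u'sq : IntegrableOn (fun r => u₀' r ^ 2) (Ioc 0 R) := (cu'.pow 2).integrableOn_Ioc
  have i_Wu : IntegrableOn (fun r => W r * u₀ r ^ 2) (Ioc 0 R) := by
    refine (i_φd.sub i_u'sq).congr ?_
    filter_upwards with x
    simp only [Pi.sub_apply, hφd]; ring
  have i_Wg : IntegrableOn (fun r => W r * g r ^ 2) (Ioc 0 R) := by
    have heq2 : (fun r => W r * g r ^ 2) = fun r => (v r * f r ^ 2 * r ^ 2) * (2 * μ)⁻¹ := by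
      funext r; simp only [hW, hgdef]; field_simp
    rw [heq2]
    exact hi2.mul_const _
  have i_Wgu : IntegrableOn (fun r => W r * (g r * u₀ r)) (Ioc 0 R) := by
    refine Integrable.mono' ((i_Wg.add i_Wu).div_const 2)
      ((hWm.aestronglyMeasurable.restrict).mul
        ((cg.mul cu).aestronglyMeasurable.restrict)) ?_
    filter_upwards with x
    have h1 := hWpos x
    have h2 : |g x * u₀ x| ≤ (g x ^ 2 + u₀ x ^ 2) / 2 := by
      nlinarith [sq_nonneg (|g x| - |u₀ x|), sq_abs (g x), sq_abs (u₀ x),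
        abs_mul (g x) (u₀ x), abs_nonneg (g x * u₀ x)]
    rw [Real.norm_eq_abs, abs_mul, abs_of_nonneg h1]
    simp only [Pi.add_apply, Pi.div_apply]
    nlinarith [abs_nonneg (g x * u₀ x)]
  -- interval integrability versions
  have II : ∀ {q : ℝ → ℝ}, IntegrableOn q (Ioc 0 R) → IntervalIntegrable q volume 0 R := by
    intro q hq
    rw [intervalIntegrable_iff, uIoc_of_le hR0.le]
    exact hq
  have iiQ1 : IntervalIntegrable (fun r => g' r ^ 2 + W r * g r ^ 2) volume 0 R :=
    (II i_g'sq).add (II i_Wg)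
  have iiQ2 : IntervalIntegrable (fun r => u₀' r * g' r + W r * (g r * u₀ r)) volume 0 R :=
    (II i_g'u).add (II i_Wgu)
  have iiB : IntervalIntegrable (fun r => f r * f r + 2 * (f r * (r * f' r))) volume 0 R :=
    II i_h'
  -- u₀' = 1 beyond R₀
  have hu1 : ∀ x, R₀ < x → u₀' x = 1 := by
    intro x hx
    have hev : ∀ᶠ y in nhds x, u₀ y = y - a := by
      filter_upwards [isOpen_Ioi.mem_nhds hx] with y hy using hasym y hy
    exact (hu₀ x).unique (((hasDerivAt_id x).sub_const a).congr_of_eventuallyEq hev)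
  -- FTC computations
  have F1 : ∫ r in (0:ℝ)..R, (f r * f r + 2 * (f r * (r * f' r))) = R * f R ^ 2 := by
    have h := integral_eq_sub_of_hasDerivAt (f := fun r => r * f r ^ 2)
      (f' := fun r => f r * f r + 2 * (f r * (r * f' r)))
      (fun x _ => by
        refine ((hasDerivAt_id x).mul ((hf x).pow 2)).congr_deriv ?_
        simp only [id_eq, Pi.pow_apply]; ring) iiB
    rw [h]
    show R * f R ^ 2 - 0 * f 0 ^ 2 = R * f R ^ 2
    ring
  have F2 : ∫ r in (0:ℝ)..R, φd r = R - a := by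
    have h := integral_eq_sub_of_hasDerivAt (f := fun r => u₀ r * u₀' r) (f' := φd)
      (fun x _ => hφ x) (II i_φd)
    rw [h]
    show u₀ R * u₀' R - u₀ 0 * u₀' 0 = R - a
    rw [h00, hasym R hR, hu1 R hR]
    ring
  have F3 : ∫ r in (0:ℝ)..R, (u₀' r * g' r + W r * (g r * u₀ r)) = R * f R := by
    have hk : ∀ x, HasDerivAt (fun r => g r * u₀' r) (u₀' x * g' x + W x * (g x * u₀ x)) x := by
      intro x
      have := (hg x).mul (hu₀' x)
      rw [hu₀'' x] at this
      exact this.congr_deriv (by ring)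
    have h := integral_eq_sub_of_hasDerivAt (fun x _ => hk x) iiQ2
    rw [h]
    show g R * u₀' R - g 0 * u₀' 0 = R * f R
    simp only [hgdef, hu1 R hR]
    ring
  -- a ≤ R₀, hence R - a > 0
  have haR₀ : a ≤ R₀ := by
    have h1 : ∫ r in Ioc R₀ R, φd r ≤ ∫ r in Ioc 0 R, φd r := by
      refine setIntegral_mono_set i_φd (Filter.Eventually.of_forall hφdnn)
        (HasSubset.Subset.eventuallyLE ?_)
      intro x hx
      exact ⟨hR₀.trans hx.1, hx.2⟩
    have h2 : ∫ r in Ioc R₀ R, (1:ℝ) ≤ ∫ r in Ioc R₀ R, φd r := by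
      refine setIntegral_mono_on (integrableOn_const measure_Ioc_lt_top.ne)
        (i_φd.mono_set (fun x hx => ⟨hR₀.trans hx.1, hx.2⟩)) measurableSet_Ioc ?_
      intro x hx
      have h3 := hu1 x hx.1
      have h4 := hWpos x
      simp only [hφd, h3]
      nlinarith [sq_nonneg (u₀ x)]
    have h5 : ∫ r in Ioc R₀ R, (1:ℝ) = R - R₀ := by
      simp [Real.volume_Ioc, ENNReal.toReal_ofReal (by linarith : (0:ℝ) ≤ R - R₀), hR.le]
    have h6 : ∫ r in Ioc 0 R, φd r = R - a := by
      rw [← F2, integral_of_le hR0.le]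
    linarith
  have hRa : 0 < R - a := by linarith
  -- Cauchy-Schwarz
  have key : (R * f R) ^ 2 / (R - a) ≤ ∫ r in (0:ℝ)..R, (g' r ^ 2 + W r * g r ^ 2) := by
    set t : ℝ := (R * f R) / (R - a) with ht
    have iiQ3 : IntervalIntegrable
        (fun r => 2 * t * (u₀' r * g' r + W r * (g r * u₀ r))) volume 0 R := iiQ2.const_mul _
    have iiQ4 : IntervalIntegrable (fun r => (g' r ^ 2 + W r * g r ^ 2)
        - 2 * t * (u₀' r * g' r + W r * (g r * u₀ r))) volume 0 R := iiQ1.sub iiQ3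
    have iiQ5 : IntervalIntegrable (fun r => t ^ 2 * φd r) volume 0 R := (II i_φd).const_mul _
    have hnn : 0 ≤ ∫ r in (0:ℝ)..R,
        ((g' r - t * u₀' r) ^ 2 + W r * (g r - t * u₀ r) ^ 2) := by
      refine integral_nonneg hR0.le ?_
      intro x _
      exact add_nonneg (sq_nonneg _) (mul_nonneg (hWpos x) (sq_nonneg _))
    have hptw : ∀ x ∈ uIcc (0:ℝ) R, (g' x - t * u₀' x) ^ 2 + W x * (g x - t * u₀ x) ^ 2
        = ((g' x ^ 2 + W x * g x ^ 2)
          - 2 * t * (u₀' x * g' x + W x * (g x * u₀ x))) + t ^ 2 * φd x := by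
      intro x _; simp only [hφd]; ring
    rw [integral_congr hptw, integral_add iiQ4 iiQ5, integral_sub iiQ1 iiQ3,
      intervalIntegral.integral_const_mul, intervalIntegral.integral_const_mul, F3, F2] at hnn
    have hid : (∫ r in (0:ℝ)..R, (g' r ^ 2 + W r * g r ^ 2)) - 2 * t * (R * f R)
        + t ^ 2 * (R - a)
        = (∫ r in (0:ℝ)..R, (g' r ^ 2 + W r * g r ^ 2)) - (R * f R) ^ 2 / (R - a) := by
      rw [ht]
      field_simp
      ring
    linarith [hid ▸ hnn]
  -- final computation
  have hTeq : ∫ r in (0:ℝ)..R, (μ * f' r ^ 2 + (1/2) * v r * f r ^ 2) * r ^ 2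
      = μ * ((∫ r in (0:ℝ)..R, (g' r ^ 2 + W r * g r ^ 2)) - R * f R ^ 2) := by
    have hptw : ∀ x ∈ uIcc (0:ℝ) R, (μ * f' x ^ 2 + (1/2) * v x * f x ^ 2) * x ^ 2
        = μ * ((g' x ^ 2 + W x * g x ^ 2) - (f x * f x + 2 * (f x * (x * f' x)))) := by
      intro x _
      simp only [hW, hgdef, hg'def]
      field_simp
      ring
    rw [integral_congr hptw, intervalIntegral.integral_const_mul, integral_sub iiQ1 iiB, F1]
  rw [hTeq]
  have hCge : (∫ r in (0:ℝ)..R, (g' r ^ 2 + W r * g r ^ 2)) * (R - a) ≥ (R * f R) ^ 2 := by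
    have h := mul_le_mul_of_nonneg_right key hRa.le
    rw [div_mul_cancel₀ _ hRa.ne'] at h
    linarith
  have hgoal : a * f R ^ 2 ≤ (∫ r in (0:ℝ)..R, (g' r ^ 2 + W r * g r ^ 2)) - R * f R ^ 2 := by
    nlinarith [hCge, hRa, ha, sq_nonneg (a * f R), sq_nonneg (f R)]
  calc μ * a * f R ^ 2 = μ * (a * f R ^ 2) := by ring
    _ ≤ _ := mul_le_mul_of_nonneg_left hgoal hμ.le



open MeasureTheory Set intervalIntegral

lemma core1d' {μ a R₀ R : ℝ} (hμ : 0 < μ) (ha : 0 < a) (hR₀ : 0 < R₀) (hR : R₀ < R)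
    (v : ℝ → ℝ) (hvm : Measurable v) (hvpos : ∀ r, 0 ≤ v r)
    (u₀ u₀' u₀'' : ℝ → ℝ)
    (hu₀ : ∀ r, HasDerivAt u₀ (u₀' r) r) (hu₀' : ∀ r, HasDerivAt u₀' (u₀'' r) r)
    (heq : ∀ r, -2 * μ * u₀'' r + v r * u₀ r = 0)
    (h00 : u₀ 0 = 0) (hasym : ∀ r, R₀ < r → u₀ r = r - a)
    (f f' : ℝ → ℝ) (hf : ∀ r, HasDerivAt f (f' r) r) :
    ENNReal.ofReal (μ * a * f R ^ 2) ≤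
      ∫⁻ r in Ioc (0:ℝ) R, ENNReal.ofReal ((μ * f' r ^ 2 + (1/2) * v r * f r ^ 2) * r ^ 2) := by
  by_cases htop : (∫⁻ r in Ioc (0:ℝ) R,
      ENNReal.ofReal ((μ * f' r ^ 2 + (1/2) * v r * f r ^ 2) * r ^ 2)) = ⊤
  · exact htop ▸ le_top
  have hR0 : (0:ℝ) < R := hR₀.trans hR
  have cf : Continuous f := Differentiable.continuous (fun x => (hf x).differentiableAt)
  have mf' : Measurable f' := by
    have : f' = deriv f := funext fun r => ((hf r).deriv).symm
    rw [this]; exact measurable_deriv f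
  set P1 : ℝ → ℝ := fun r => μ * f' r ^ 2 * r ^ 2 with hP1
  set P2 : ℝ → ℝ := fun r => (1/2) * v r * f r ^ 2 * r ^ 2 with hP2
  have mP1 : Measurable P1 := by fun_prop
  have mP2 : Measurable P2 := by
    apply Measurable.mul _ (measurable_id.pow_const 2)
    exact (measurable_const.mul hvm).mul ((cf.measurable).pow_const 2)
  have hP1nn : ∀ r, 0 ≤ P1 r := fun r => by
    have := sq_nonneg (f' r); have := sq_nonneg r; simp only [hP1]; positivity
  have hP2nn : ∀ r, 0 ≤ P2 r := fun r => by
    have := hvpos r; have := sq_nonneg (f r); have := sq_nonneg r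
    simp only [hP2]; positivity
  have hsplit : (∫⁻ r in Ioc (0:ℝ) R,
      ENNReal.ofReal ((μ * f' r ^ 2 + (1/2) * v r * f r ^ 2) * r ^ 2))
      = (∫⁻ r in Ioc (0:ℝ) R, ENNReal.ofReal (P1 r))
        + ∫⁻ r in Ioc (0:ℝ) R, ENNReal.ofReal (P2 r) := by
    rw [← lintegral_add_left (mP1.ennreal_ofReal)]
    refine setLIntegral_congr_fun measurableSet_Ioc (fun r _ => ?_)
    rw [← ENNReal.ofReal_add (hP1nn r) (hP2nn r)]
    congr 1
    simp only [hP1, hP2]; ring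
  rw [hsplit] at htop
  have h1 : (∫⁻ r in Ioc (0:ℝ) R, ENNReal.ofReal (P1 r)) ≠ ⊤ :=
    fun h => htop (by rw [h, top_add])
  have h2 : (∫⁻ r in Ioc (0:ℝ) R, ENNReal.ofReal (P2 r)) ≠ ⊤ :=
    fun h => htop (by rw [h, add_top])
  have iP1 : IntegrableOn P1 (Ioc 0 R) :=
    ⟨mP1.aestronglyMeasurable.restrict,
      (hasFiniteIntegral_iff_ofReal (Filter.Eventually.of_forall hP1nn)).2 h1.lt_top⟩
  have iP2 : IntegrableOn P2 (Ioc 0 R) :=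
    ⟨mP2.aestronglyMeasurable.restrict,
      (hasFiniteIntegral_iff_ofReal (Filter.Eventually.of_forall hP2nn)).2 h2.lt_top⟩
  have hi1 : IntegrableOn (fun r => f' r ^ 2 * r ^ 2) (Ioc 0 R) := by
    refine (iP1.const_mul μ⁻¹).congr ?_
    filter_upwards with r
    simp only [hP1]
    field_simp
  have hi2 : IntegrableOn (fun r => v r * f r ^ 2 * r ^ 2) (Ioc 0 R) := by
    refine (iP2.const_mul 2).congr ?_
    filter_upwards with r
    simp only [hP2]
    ring
  have hreal := core1d hμ ha hR₀ hR v hvm hvpos u₀ u₀' u₀'' hu₀ hu₀' heq h00 hasym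
    f f' hf hi1 hi2
  have hint : IntegrableOn (fun r => (μ * f' r ^ 2 + (1/2) * v r * f r ^ 2) * r ^ 2)
      (Ioc 0 R) := by
    refine (iP1.add iP2).congr ?_
    filter_upwards with r
    simp only [Pi.add_apply, hP1, hP2]
    ring
  have hnn : ∀ r, 0 ≤ (μ * f' r ^ 2 + (1/2) * v r * f r ^ 2) * r ^ 2 := by
    intro r
    have := hvpos r; have := sq_nonneg (f' r); have := sq_nonneg (f r); have := sq_nonneg r
    positivity
  calc ENNReal.ofReal (μ * a * f R ^ 2)
      ≤ ENNReal.ofReal (∫ r in (0:ℝ)..R, (μ * f' r ^ 2 + (1/2) * v r * f r ^ 2) * r ^ 2) :=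
        ENNReal.ofReal_le_ofReal hreal
    _ = ∫⁻ r in Ioc (0:ℝ) R, ENNReal.ofReal ((μ * f' r ^ 2 + (1/2) * v r * f r ^ 2) * r ^ 2) := by
        rw [integral_of_le hR0.le,
          ofReal_integral_eq_lintegral_ofReal hint (Filter.Eventually.of_forall hnn)]

lemma superpos {μ a R₀ : ℝ} (hμ : 0 < μ) (ha : 0 < a) (hR₀ : 0 < R₀)
    (v : ℝ → ℝ) (hvm : Measurable v) (hvpos : ∀ r, 0 ≤ v r)
    (u₀ u₀' u₀'' : ℝ → ℝ)
    (hu₀ : ∀ r, HasDerivAt u₀ (u₀' r) r) (hu₀' : ∀ r, HasDerivAt u₀' (u₀'' r) r)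
    (heq : ∀ r, -2 * μ * u₀'' r + v r * u₀ r = 0)
    (h00 : u₀ 0 = 0) (hasym : ∀ r, R₀ < r → u₀ r = r - a)
    (U : ℝ → ℝ) (hUm : Measurable U) (hUpos : ∀ r, 0 ≤ U r)
    (hUsupp : ∀ r, r < R₀ → U r = 0)
    (hUi : IntegrableOn (fun r => U r * r ^ 2) (Set.Ioi (0:ℝ)))
    (hUint : ∫ r in Set.Ioi (0:ℝ), U r * r ^ 2 ≤ 1)
    (f f' : ℝ → ℝ) (hf : ∀ r, HasDerivAt f (f' r) r)
    (I : Set ℝ) (hImeas : MeasurableSet I) (hIpos : I ⊆ Ioi 0)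
    (hdcl : ∀ R ∈ I, Ioc (0:ℝ) R ⊆ I) :
    ENNReal.ofReal (μ * a) *
        ∫⁻ r in I, ENNReal.ofReal (U r * f r ^ 2) * ENNReal.ofReal (r ^ 2)
      ≤ ∫⁻ r in I, ENNReal.ofReal (μ * f' r ^ 2 + (1/2) * v r * f r ^ 2)
          * ENNReal.ofReal (r ^ 2) := by
  set Q := ∫⁻ r in I, ENNReal.ofReal (μ * f' r ^ 2 + (1/2) * v r * f r ^ 2)
      * ENNReal.ofReal (r ^ 2) with hQ
  have step1 : ∀ R ∈ I, R₀ < R → ENNReal.ofReal (μ * a * f R ^ 2) ≤ Q := by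
    intro R hRI hRR
    calc ENNReal.ofReal (μ * a * f R ^ 2)
        ≤ ∫⁻ r in Ioc (0:ℝ) R, ENNReal.ofReal ((μ * f' r ^ 2 + (1/2) * v r * f r ^ 2) * r ^ 2) :=
          core1d' hμ ha hR₀ hRR v hvm hvpos u₀ u₀' u₀'' hu₀ hu₀' heq h00 hasym f f' hf
      _ = ∫⁻ r in Ioc (0:ℝ) R, ENNReal.ofReal (μ * f' r ^ 2 + (1/2) * v r * f r ^ 2)
            * ENNReal.ofReal (r ^ 2) := by
          refine setLIntegral_congr_fun measurableSet_Ioc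
            (fun r _ => ?_)
          rw [ENNReal.ofReal_mul]
          have := hvpos r; have := sq_nonneg (f' r); have := sq_nonneg (f r)
          positivity
      _ ≤ Q := lintegral_mono_set (hdcl R hRI)
  have hrearr : ∀ r : ℝ, ENNReal.ofReal (μ * a)
      * (ENNReal.ofReal (U r * f r ^ 2) * ENNReal.ofReal (r ^ 2))
      = ENNReal.ofReal (U r * r ^ 2) * ENNReal.ofReal (μ * a * f r ^ 2) := by
    intro r
    rw [ENNReal.ofReal_mul (hUpos r), ENNReal.ofReal_mul (hUpos r),
      show μ * a * f r ^ 2 = (μ * a) * f r ^ 2 from rfl,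
      ENNReal.ofReal_mul (mul_nonneg hμ.le ha.le)]
    ring
  have hUrm : Measurable fun r : ℝ => ENNReal.ofReal (U r * r ^ 2) :=
    (hUm.mul (measurable_id.pow_const 2)).ennreal_ofReal
  have hae : ∀ᵐ r ∂(volume.restrict I),
      ENNReal.ofReal (U r * r ^ 2) * ENNReal.ofReal (μ * a * f r ^ 2)
        ≤ ENNReal.ofReal (U r * r ^ 2) * Q := by
    have h0 : ∀ᵐ r : ℝ ∂volume, r ≠ R₀ := by
      refine ae_iff.2 ?_
      simp only [ne_eq, not_not]
      simpa using Real.volume_singleton (a := R₀)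
    filter_upwards [ae_restrict_mem hImeas, ae_restrict_of_ae h0] with r hrI hrne
    rcases lt_or_gt_of_ne hrne with hlt | hgt
    · simp [hUsupp r hlt]
    · exact mul_le_mul_right (step1 r hrI hgt) _
  calc ENNReal.ofReal (μ * a) *
        ∫⁻ r in I, ENNReal.ofReal (U r * f r ^ 2) * ENNReal.ofReal (r ^ 2)
      = ∫⁻ r in I, ENNReal.ofReal (U r * r ^ 2) * ENNReal.ofReal (μ * a * f r ^ 2) := by
        rw [← lintegral_const_mul' _ _ ENNReal.ofReal_ne_top]
        exact lintegral_congr fun r => hrearr r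
    _ ≤ ∫⁻ r in I, ENNReal.ofReal (U r * r ^ 2) * Q := lintegral_mono_ae hae
    _ = (∫⁻ r in I, ENNReal.ofReal (U r * r ^ 2)) * Q := lintegral_mul_const Q hUrm
    _ ≤ 1 * Q := by
        refine mul_le_mul_left ?_ Q
        calc ∫⁻ r in I, ENNReal.ofReal (U r * r ^ 2)
            ≤ ∫⁻ r in Ioi (0:ℝ), ENNReal.ofReal (U r * r ^ 2) := lintegral_mono_set hIpos
          _ = ENNReal.ofReal (∫ r in Ioi (0:ℝ), U r * r ^ 2) :=
              (ofReal_integral_eq_lintegral_ofReal hUi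
                (Filter.Eventually.of_forall fun r => mul_nonneg (hUpos r) (sq_nonneg r))).symm
          _ ≤ 1 := by
              calc ENNReal.ofReal (∫ r in Ioi (0:ℝ), U r * r ^ 2)
                  ≤ ENNReal.ofReal 1 := ENNReal.ofReal_le_ofReal hUint
                _ = 1 := ENNReal.ofReal_one
    _ = Q := one_mul Q


open MeasureTheory Set Metric

noncomputable section

local notation "E3" => EuclideanSpace ℝ (Fin 3)

lemma polar_lintegral (h : EuclideanSpace ℝ (Fin 3) → ENNReal) (hm : Measurable h) :
    ∫⁻ x, h x = ∫⁻ ω : sphere (0:E3) 1, ∫⁻ r in Set.Ioi (0:ℝ),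
      h (r • (ω:E3)) * ENNReal.ofReal (r^2) ∂volume ∂((volume : Measure E3).toSphere) := by
  have hdim : Module.finrank ℝ E3 = 3 := by simp [finrank_euclideanSpace]
  have h0 : (volume : Measure E3) {0} = 0 := measure_singleton 0
  have mp := Measure.measurePreserving_homeomorphUnitSphereProd (volume : Measure E3)
  have hG : Measurable fun p : sphere (0:E3) 1 × Ioi (0:ℝ) => h (p.2.1 • (p.1 : E3)) := by
    apply hm.comp
    exact (measurable_subtype_coe.comp measurable_snd).smul
      (measurable_subtype_coe.comp measurable_fst)
  calc ∫⁻ x, h x = ∫⁻ x in ({0}ᶜ : Set E3), h x := by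
        rw [← lintegral_add_compl (μ := volume) (h) (measurableSet_singleton (0:E3))]
        rw [setLIntegral_measure_zero _ _ h0, zero_add]
    _ = ∫⁻ x : ({0}ᶜ : Set E3), h x ∂((volume : Measure E3).comap Subtype.val) := by
        rw [lintegral_subtype_comap (measurableSet_singleton (0:E3)).compl]
    _ = ∫⁻ p : sphere (0:E3) 1 × Ioi (0:ℝ), h (p.2.1 • (p.1 : E3))
          ∂(((volume : Measure E3).toSphere).prod (Measure.volumeIoiPow 2)) := by
        rw [hdim] at mp
        rw [← mp.lintegral_comp hG]
        congr 1
        ext x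
        congr 1
        have h1 := congrArg (Subtype.val)
          ((homeomorphUnitSphereProd E3).symm_apply_apply x)
        rw [homeomorphUnitSphereProd_symm_apply_coe] at h1
        exact h1.symm
    _ = ∫⁻ ω : sphere (0:E3) 1, ∫⁻ r in Set.Ioi (0:ℝ),
          h (r • (ω:E3)) * ENNReal.ofReal (r^2) ∂volume ∂((volume : Measure E3).toSphere) := by
        rw [lintegral_prod _ hG.aemeasurable]
        refine lintegral_congr fun ω => ?_
        rw [Measure.volumeIoiPow, lintegral_withDensity_eq_lintegral_mul _ (by fun_prop) (by fun_prop)]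
        rw [show ((fun r : Ioi (0:ℝ) => ENNReal.ofReal ((r:ℝ)^2)) *
            fun y : Ioi (0:ℝ) => h ((y:ℝ) • (ω:E3))) = fun y : Ioi (0:ℝ) =>
            (fun r : ℝ => ENNReal.ofReal (r^2) * h (r • (ω:E3))) (y:ℝ) from rfl,
          lintegral_subtype_comap measurableSet_Ioi]
        refine setLIntegral_congr_fun measurableSet_Ioi (fun r hr => ?_)
        rw [mul_comm]


open Set Metric in
/-- **Dyson's lemma, 3D**: let `v ≥ 0` have finite range `R₀` and scattering length `a`
(defined via the zero-energy scattering solution `u₀`). Let `U ≥ 0` satisfy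
`∫₀^∞ U(r) r² dr ≤ 1` and `U(r) = 0` for `r < R₀`, and let `B ⊂ ℝ³` be star-shaped with
respect to the origin. Then for all differentiable `ψ` on `B`:
`∫_B [μ|∇ψ|² + (1/2)v(|x|)|ψ|²] dx ≥ μ a ∫_B U(|x|)|ψ|² dx`. -/
theorem dyson_lemma_3d (μ a R₀ : ℝ) (hμ : 0 < μ) (hR₀ : 0 < R₀)
    (v : ℝ → ℝ) (hvm : Measurable v) (hvpos : ∀ r, 0 ≤ v r)
    (hvsupp : ∀ r, R₀ < r → v r = 0)
    (u₀ u₀' u₀'' : ℝ → ℝ)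
    (hu₀ : ∀ r, HasDerivAt u₀ (u₀' r) r) (hu₀' : ∀ r, HasDerivAt u₀' (u₀'' r) r)
    (heq : ∀ r, -2 * μ * u₀'' r + v r * u₀ r = 0)
    (h00 : u₀ 0 = 0) (hasym : ∀ r, R₀ < r → u₀ r = r - a)
    (U : ℝ → ℝ) (hUm : Measurable U) (hUpos : ∀ r, 0 ≤ U r)
    (hUsupp : ∀ r, r < R₀ → U r = 0)
    (hUi : IntegrableOn (fun r => U r * r ^ 2) (Set.Ioi (0:ℝ)))
    (hUint : ∫ r in Set.Ioi (0:ℝ), U r * r ^ 2 ≤ 1)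
    (B : Set (EuclideanSpace ℝ (Fin 3))) (hBm : MeasurableSet B)
    (hstar : ∀ x ∈ B, ∀ t : ℝ, t ∈ Set.Icc (0:ℝ) 1 → t • x ∈ B)
    (ψ : EuclideanSpace ℝ (Fin 3) → ℝ) (hψ : Differentiable ℝ ψ) :
    ENNReal.ofReal (μ * a) * ∫⁻ x in B, ENNReal.ofReal (U ‖x‖ * ψ x ^ 2) ≤
      ∫⁻ x in B, ENNReal.ofReal (μ * ‖fderiv ℝ ψ x‖ ^ 2 + (1 / 2) * v ‖x‖ * ψ x ^ 2) := by
  by_cases hA : a ≤ 0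
  · have h0 : ENNReal.ofReal (μ * a) = 0 := by
      rw [ENNReal.ofReal_eq_zero]
      nlinarith
    rw [h0, zero_mul]
    exact zero_le
  push_neg at hA
  set h₁ : EuclideanSpace ℝ (Fin 3) → ENNReal :=
    fun x => ENNReal.ofReal (U ‖x‖ * ψ x ^ 2) with hh₁
  set h₂ : EuclideanSpace ℝ (Fin 3) → ENNReal :=
    fun x => ENNReal.ofReal (μ * ‖fderiv ℝ ψ x‖ ^ 2 + (1 / 2) * v ‖x‖ * ψ x ^ 2) with hh₂
  have mψ : Measurable ψ := hψ.continuous.measurable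
  have mh₁ : Measurable h₁ :=
    ((hUm.comp measurable_norm).mul (mψ.pow_const 2)).ennreal_ofReal
  have mD : Measurable fun x : EuclideanSpace ℝ (Fin 3) => ‖fderiv ℝ ψ x‖ :=
    (measurable_fderiv ℝ ψ).norm
  have mh₂ : Measurable h₂ := by
    apply Measurable.ennreal_ofReal
    exact ((measurable_const.mul (mD.pow_const 2))).add
      (((measurable_const.mul (hvm.comp measurable_norm))).mul (mψ.pow_const 2))
  -- per-direction data
  have main : ∀ ω : sphere (0 : EuclideanSpace ℝ (Fin 3)) 1,
      ENNReal.ofReal (μ * a) *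
        ∫⁻ r in Ioi (0:ℝ), (B.indicator h₁) (r • (ω : EuclideanSpace ℝ (Fin 3)))
          * ENNReal.ofReal (r ^ 2)
      ≤ ∫⁻ r in Ioi (0:ℝ), (B.indicator h₂) (r • (ω : EuclideanSpace ℝ (Fin 3)))
          * ENNReal.ofReal (r ^ 2) := by
    intro ω
    set ωE : EuclideanSpace ℝ (Fin 3) := (ω : EuclideanSpace ℝ (Fin 3)) with hωE
    have hω : ‖ωE‖ = 1 := mem_sphere_zero_iff_norm.1 ω.2
    set f : ℝ → ℝ := fun r => ψ (r • ωE) with hfdef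
    set f' : ℝ → ℝ := fun r => (fderiv ℝ ψ (r • ωE)) ωE with hf'def
    have hcurve : ∀ r : ℝ, HasDerivAt (fun s : ℝ => s • ωE) ωE r := by
      intro r
      simpa using (hasDerivAt_id r).smul_const ωE
    have hf : ∀ r, HasDerivAt f (f' r) r := by
      intro r
      exact ((hψ (r • ωE)).hasFDerivAt).comp_hasDerivAt r (hcurve r)
    set I : Set ℝ := Ioi 0 ∩ ((fun r : ℝ => r • ωE) ⁻¹' B) with hI
    have hcont : Continuous fun r : ℝ => r • ωE := continuous_id.smul continuous_const
    have hImeas : MeasurableSet I := measurableSet_Ioi.inter (hcont.measurable hBm)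
    have hIpos : I ⊆ Ioi 0 := inter_subset_left
    have hdcl : ∀ R ∈ I, Ioc (0:ℝ) R ⊆ I := by
      rintro R ⟨hR1, hR2⟩ r ⟨hr1, hr2⟩
      refine ⟨hr1, ?_⟩
      have hR0 : (0:ℝ) < R := hR1
      have ht : r / R ∈ Icc (0:ℝ) 1 :=
        ⟨div_nonneg hr1.le hR0.le, (div_le_one hR0).2 hr2⟩
      have := hstar (R • ωE) hR2 (r / R) ht
      rwa [smul_smul, div_mul_cancel₀ _ hR0.ne'] at this
    have hnorm : ∀ r : ℝ, 0 < r → ‖r • ωE‖ = r := by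
      intro r hr
      rw [norm_smul, hω, mul_one, Real.norm_eq_abs, abs_of_pos hr]
    -- LHS inner integral
    have e₁ : ∫⁻ r in Ioi (0:ℝ), (B.indicator h₁) (r • ωE) * ENNReal.ofReal (r ^ 2)
        = ∫⁻ r in I, ENNReal.ofReal (U r * f r ^ 2) * ENNReal.ofReal (r ^ 2) := by
      rw [setLIntegral_congr_fun measurableSet_Ioi
        (fun r hr => ?_),
        lintegral_indicator hImeas _, Measure.restrict_restrict hImeas,
        inter_eq_self_of_subset_left hIpos]
      show (B.indicator h₁) (r • ωE) * ENNReal.ofReal (r ^ 2)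
        = I.indicator (fun r => ENNReal.ofReal (U r * f r ^ 2) * ENNReal.ofReal (r ^ 2)) r
      by_cases hrB : r • ωE ∈ B
      · rw [indicator_of_mem hrB, indicator_of_mem (show r ∈ I from ⟨hr, hrB⟩), hh₁]
        simp only [hnorm r hr, hfdef]
      · rw [indicator_of_notMem hrB, indicator_of_notMem (fun h => hrB h.2), zero_mul]
    -- RHS inner integral
    have e₂ : ∫⁻ r in Ioi (0:ℝ), (B.indicator h₂) (r • ωE) * ENNReal.ofReal (r ^ 2)
        = ∫⁻ r in I, ENNReal.ofReal (μ * ‖fderiv ℝ ψ (r • ωE)‖ ^ 2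
            + (1 / 2) * v r * f r ^ 2) * ENNReal.ofReal (r ^ 2) := by
      rw [setLIntegral_congr_fun measurableSet_Ioi
        (fun r hr => ?_),
        lintegral_indicator hImeas _, Measure.restrict_restrict hImeas,
        inter_eq_self_of_subset_left hIpos]
      show (B.indicator h₂) (r • ωE) * ENNReal.ofReal (r ^ 2)
        = I.indicator (fun r => ENNReal.ofReal (μ * ‖fderiv ℝ ψ (r • ωE)‖ ^ 2
            + (1 / 2) * v r * f r ^ 2) * ENNReal.ofReal (r ^ 2)) r
      by_cases hrB : r • ωE ∈ B
      · rw [indicator_of_mem hrB, indicator_of_mem (show r ∈ I from ⟨hr, hrB⟩), hh₂]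
        simp only [hnorm r hr, hfdef]
      · rw [indicator_of_notMem hrB, indicator_of_notMem (fun h => hrB h.2), zero_mul]
    have e₃ : ∫⁻ r in I, ENNReal.ofReal (μ * f' r ^ 2 + (1/2) * v r * f r ^ 2)
          * ENNReal.ofReal (r ^ 2)
        ≤ ∫⁻ r in I, ENNReal.ofReal (μ * ‖fderiv ℝ ψ (r • ωE)‖ ^ 2
            + (1 / 2) * v r * f r ^ 2) * ENNReal.ofReal (r ^ 2) := by
      refine lintegral_mono fun r => ?_
      refine mul_le_mul_left (ENNReal.ofReal_le_ofReal ?_) _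
      have hb : |f' r| ≤ ‖fderiv ℝ ψ (r • ωE)‖ := by
        calc |f' r| = ‖(fderiv ℝ ψ (r • ωE)) ωE‖ := rfl
          _ ≤ ‖fderiv ℝ ψ (r • ωE)‖ * ‖ωE‖ := (fderiv ℝ ψ (r • ωE)).le_opNorm ωE
          _ = ‖fderiv ℝ ψ (r • ωE)‖ := by rw [hω, mul_one]
      have hsq : f' r ^ 2 ≤ ‖fderiv ℝ ψ (r • ωE)‖ ^ 2 := by
        rw [← sq_abs (f' r)]
        exact pow_le_pow_left₀ (abs_nonneg _) hb 2
      nlinarith [hμ.le]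
    rw [e₁, e₂]
    calc ENNReal.ofReal (μ * a) *
          ∫⁻ r in I, ENNReal.ofReal (U r * f r ^ 2) * ENNReal.ofReal (r ^ 2)
        ≤ ∫⁻ r in I, ENNReal.ofReal (μ * f' r ^ 2 + (1/2) * v r * f r ^ 2)
            * ENNReal.ofReal (r ^ 2) :=
          superpos hμ hA hR₀ v hvm hvpos u₀ u₀' u₀'' hu₀ hu₀' heq h00 hasym
            U hUm hUpos hUsupp hUi hUint f f' hf I hImeas hIpos hdcl
      _ ≤ _ := e₃
  -- assemble
  have p₁ := polar_lintegral (B.indicator h₁) (mh₁.indicator hBm)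
  have p₂ := polar_lintegral (B.indicator h₂) (mh₂.indicator hBm)
  rw [← lintegral_indicator hBm h₁, ← lintegral_indicator hBm h₂, p₁, p₂,
    ← lintegral_const_mul' _ _ ENNReal.ofReal_ne_top]
  exact lintegral_mono fun ω => main ω
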